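/- Let f : ℝ^n → ℝ be continuously differentiable, P_0 : ℝ^n → [0, ∞] proper closed, and for i = 1,…,m let A_i : ℝ^n → ℝ^{n_i} be linear with adjoint A_i^* and P_i : ℝ^{n_i} → [0, ∞] proper closed; fix λ_i > 0. Suppose {x^l}_{l ≥ 0} ⊂ ℝ^n satisfies ‖x^{l+1} − x^l‖ → 0, the positive reals {β_l} are bounded, and for every l the point x^{l+1} is a global minimizer of x ↦ ⟨∇f(x^l) + Σ_{i=1}^m (1/λ_i) A_i^*(A_i x^l − ζ_i^l), x⟩ + (β_l/2)‖x − x^l‖² + P_0(x), where ζ_i^l ∈ prox_{λ_i P_i}(A_i x^l) for each i. Then for every ε > 0 there exists an index l such that dist(0, ∇f(x^l) + ∂P_0(x^{l+1}) + Σ_{i=1}^m (1/λ_i) A_i^*(A_i x^l − ζ_i^l)) ≤ ε and ‖x^{l+1} − x^l‖ ≤ ε, where ∂P_0 denotes the limiting subdifferential and the distance is taken to the Minkowski sum of the set ∂P_0(x^{l+1}) translated by the indicated vectors. -/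

import Mathlib

open Filter Topology
open scoped ENNReal NNReal

/-- The proximal mapping of `λ h` at `x`. -/
def proxSet {d : ℕ} (h : EuclideanSpace ℝ (Fin d) → EReal) (lam : ℝ)
    (x : EuclideanSpace ℝ (Fin d)) : Set (EuclideanSpace ℝ (Fin d)) :=
  {z | ∀ y, (((1 / (2 * lam)) * ‖x - z‖ ^ 2 : ℝ) : EReal) + h z ≤
      (((1 / (2 * lam)) * ‖x - y‖ ^ 2 : ℝ) : EReal) + h y}

/-- The Fréchet (regular) subdifferential of `h` at `w`. -/
def frechetSubdiff {d : ℕ} (h : EuclideanSpace ℝ (Fin d) → EReal)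
    (w : EuclideanSpace ℝ (Fin d)) : Set (EuclideanSpace ℝ (Fin d)) :=
  {u | h w ≠ ⊤ ∧ 0 ≤ Filter.liminf
      (fun y => (h y - h w - ((inner ℝ u (y - w) : ℝ) : EReal)) / ((‖y - w‖ : ℝ) : EReal))
      (𝓝[≠] w)}

/-- The limiting subdifferential of `h` at `x`. -/
def limitingSubdiff {d : ℕ} (h : EuclideanSpace ℝ (Fin d) → EReal)
    (x : EuclideanSpace ℝ (Fin d)) : Set (EuclideanSpace ℝ (Fin d)) :=
  {u | h x ≠ ⊤ ∧ ∃ xs us : ℕ → EuclideanSpace ℝ (Fin d),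
      Tendsto xs atTop (𝓝 x) ∧
      Tendsto (fun t => h (xs t)) atTop (𝓝 (h x)) ∧
      Tendsto us atTop (𝓝 u) ∧
      ∀ t, us t ∈ frechetSubdiff h (xs t)}

/-- Finite termination of the inner stopping criterion: along the inner
NPG-with-majorization iterates, for every `ε > 0` there is an index `l` with
`dist(0, ∇f(x^l) + ∂P_0(x^{l+1}) + Σ_i (1/λ_i) A_i^*(A_i x^l − ζ_i^l)) ≤ ε`
and `‖x^{l+1} − x^l‖ ≤ ε`. -/
theorem inner_stopping_criterion {n m : ℕ} {ni : Fin m → ℕ}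
    (f : EuclideanSpace ℝ (Fin n) → ℝ) (hf : ContDiff ℝ 1 f)
    (P0 : EuclideanSpace ℝ (Fin n) → EReal)
    (hP0nn : ∀ x, 0 ≤ P0 x) (hP0proper : ∃ x, P0 x ≠ ⊤)
    (hP0closed : LowerSemicontinuous P0)
    (A : (i : Fin m) → EuclideanSpace ℝ (Fin n) →L[ℝ] EuclideanSpace ℝ (Fin (ni i)))
    (P : (i : Fin m) → EuclideanSpace ℝ (Fin (ni i)) → EReal)
    (hPnn : ∀ i y, 0 ≤ P i y) (hPproper : ∀ i, ∃ y, P i y ≠ ⊤)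
    (hPclosed : ∀ i, LowerSemicontinuous (P i))
    (lam : Fin m → ℝ) (hlampos : ∀ i, 0 < lam i)
    (x : ℕ → EuclideanSpace ℝ (Fin n))
    (hstep : Tendsto (fun l => ‖x (l + 1) - x l‖) atTop (𝓝 0))
    (β : ℕ → ℝ) (hβpos : ∀ l, 0 < β l) (hβbdd : ∃ B : ℝ, ∀ l, β l ≤ B)
    (ζ : (i : Fin m) → ℕ → EuclideanSpace ℝ (Fin (ni i)))
    (hζ : ∀ i l, ζ i l ∈ proxSet (P i) (lam i) (A i (x l)))
    (v : ℕ → EuclideanSpace ℝ (Fin n))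
    (hv : ∀ l, v l = gradient f (x l) +
      ∑ i, (1 / lam i) • (ContinuousLinearMap.adjoint (A i)) (A i (x l) - ζ i l))
    (hmin : ∀ l, ∀ w : EuclideanSpace ℝ (Fin n),
      ((inner ℝ (v l) (x (l + 1)) + (β l / 2) * ‖x (l + 1) - x l‖ ^ 2 : ℝ) : EReal)
          + P0 (x (l + 1)) ≤
      ((inner ℝ (v l) w + (β l / 2) * ‖w - x l‖ ^ 2 : ℝ) : EReal) + P0 w) :
    ∀ ε : ℝ, 0 < ε → ∃ l,
      (⨅ η ∈ limitingSubdiff P0 (x (l + 1)), (‖η + v l‖₊ : ℝ≥0∞)) ≤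
        ENNReal.ofReal ε ∧
      ‖x (l + 1) - x l‖ ≤ ε := by
  intro ε hε
  obtain ⟨B, hB⟩ := hβbdd
  have hB0 : 0 < B := lt_of_lt_of_le (hβpos 0) (hB 0)
  have hc : (0:ℝ) < min ε (ε / B) := lt_min hε (div_pos hε hB0)
  have hev : ∀ᶠ l in atTop, ‖x (l + 1) - x l‖ < min ε (ε / B) :=
    hstep.eventually_lt_const hc
  obtain ⟨l, hl⟩ := hev.exists
  set η : EuclideanSpace ℝ (Fin n) := -v l - β l • (x (l + 1) - x l) with hη
  -- P0 (x (l+1)) is finite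
  have hwtop : P0 (x (l + 1)) ≠ ⊤ := by
    obtain ⟨y0, hy0⟩ := hP0proper
    intro htop
    have h1 := hmin l y0
    rw [htop, EReal.coe_add_top] at h1
    exact absurd (top_le_iff.mp h1) (EReal.add_lt_top (EReal.coe_ne_top _) hy0).ne
  have hwbot : P0 (x (l + 1)) ≠ ⊥ := fun h => absurd (hP0nn (x (l + 1))) (by simp [h])
  set pw := (P0 (x (l + 1))).toReal with hpwdef
  have hpw : P0 (x (l + 1)) = (pw : EReal) := (EReal.coe_toReal hwtop hwbot).symm
  -- key pointwise lower bound for the difference quotient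
  have key : ∀ y : EuclideanSpace ℝ (Fin n), y ≠ x (l + 1) →
      ((-(β l / 2) * ‖y - x (l + 1)‖ : ℝ) : EReal) ≤
      (P0 y - P0 (x (l + 1)) - ((inner ℝ η (y - x (l + 1)) : ℝ) : EReal)) /
        ((‖y - x (l + 1)‖ : ℝ) : EReal) := by
    intro y hy
    have hnorm : (0:ℝ) < ‖y - x (l + 1)‖ := by
      rw [norm_pos_iff, sub_ne_zero]; exact hy
    by_cases hyt : P0 y = ⊤
    · rw [hyt, hpw]
      have h1 : (⊤ : EReal) - (pw : EReal) - ((inner ℝ η (y - x (l + 1)) : ℝ) : EReal) = ⊤ := by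
        rw [EReal.top_sub_coe, EReal.top_sub_coe]
      rw [h1, EReal.top_div_of_pos_ne_top (by exact_mod_cast hnorm) (EReal.coe_ne_top _)]
      exact le_top
    · have hyb : P0 y ≠ ⊥ := fun h => absurd (hP0nn y) (by simp [h])
      set py := (P0 y).toReal with hpydef
      have hpy : P0 y = (py : EReal) := (EReal.coe_toReal hyt hyb).symm
      rw [hpy, hpw]
      have hcast :
          ((py : EReal) - (pw : EReal) - ((inner ℝ η (y - x (l + 1)) : ℝ) : EReal)) /
            ((‖y - x (l + 1)‖ : ℝ) : EReal)
          = (((py - pw - inner ℝ η (y - x (l + 1))) / ‖y - x (l + 1)‖ : ℝ) : EReal) := by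
        norm_cast
      rw [hcast, EReal.coe_le_coe_iff, le_div_iff₀ hnorm]
      -- now a purely real inequality
      have hm := hmin l y
      rw [hpy, hpw] at hm
      have hm' : inner ℝ (v l) (x (l + 1)) + β l / 2 * ‖x (l + 1) - x l‖ ^ 2 + pw ≤
          inner ℝ (v l) y + β l / 2 * ‖y - x l‖ ^ 2 + py := by exact_mod_cast hm
      have hexp : ‖y - x l‖ ^ 2 =
          ‖y - x (l + 1)‖ ^ 2 + 2 * inner ℝ (y - x (l + 1)) (x (l + 1) - x l) +
            ‖x (l + 1) - x l‖ ^ 2 := by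
        have h2 : y - x l = (y - x (l + 1)) + (x (l + 1) - x l) := by abel
        rw [h2, @norm_add_sq_real]
      have hinner : (inner ℝ η (y - x (l + 1)) : ℝ) =
          -(inner ℝ (v l) (y - x (l + 1))) -
            β l * inner ℝ (x (l + 1) - x l) (y - x (l + 1)) := by
        rw [hη, inner_sub_left, inner_neg_left, real_inner_smul_left]
      have hsub : (inner ℝ (v l) y : ℝ) - inner ℝ (v l) (x (l + 1)) =
          inner ℝ (v l) (y - x (l + 1)) := (inner_sub_right _ _ _).symm
      have hcomm : (inner ℝ (y - x (l + 1)) (x (l + 1) - x l) : ℝ) =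
          inner ℝ (x (l + 1) - x l) (y - x (l + 1)) := real_inner_comm _ _
      have hexp2 : β l / 2 * ‖y - x l‖ ^ 2 =
          β l / 2 * ‖y - x (l + 1)‖ ^ 2 + β l * inner ℝ (y - x (l + 1)) (x (l + 1) - x l) +
            β l / 2 * ‖x (l + 1) - x l‖ ^ 2 := by rw [hexp]; ring
      have hcomm2 : β l * (inner ℝ (y - x (l + 1)) (x (l + 1) - x l) : ℝ) =
          β l * inner ℝ (x (l + 1) - x l) (y - x (l + 1)) := by rw [hcomm]
      rw [show -(β l / 2) * ‖y - x (l + 1)‖ * ‖y - x (l + 1)‖ =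
          -(β l / 2) * ‖y - x (l + 1)‖ ^ 2 from by ring]
      linarith [hm', hexp2, hinner, hsub, hcomm2]
  -- η is a Fréchet subgradient at x (l+1)
  have hfre : η ∈ frechetSubdiff P0 (x (l + 1)) := by
    refine ⟨hwtop, ?_⟩
    by_cases hbot : (𝓝[≠] (x (l + 1)) : Filter (EuclideanSpace ℝ (Fin n))) = ⊥
    · rw [hbot, liminf_bot]; exact le_top
    · haveI : (𝓝[≠] (x (l + 1))).NeBot := ⟨hbot⟩
      have h1 : Tendsto
          (fun y => ((-(β l / 2) * ‖y - x (l + 1)‖ : ℝ) : EReal))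
          (𝓝[≠] (x (l + 1))) (𝓝 0) := by
        have hcont : Continuous
            (fun y : EuclideanSpace ℝ (Fin n) => -(β l / 2) * ‖y - x (l + 1)‖) :=
          continuous_const.mul ((continuous_id.sub continuous_const).norm)
        have h0 : Tendsto (fun y : EuclideanSpace ℝ (Fin n) => -(β l / 2) * ‖y - x (l + 1)‖)
            (𝓝 (x (l + 1))) (𝓝 0) := by simpa using hcont.tendsto (x (l + 1))
        have := (EReal.tendsto_coe (a := 0)).2 h0
        simpa using this.mono_left nhdsWithin_le_nhds
      rw [← h1.liminf_eq]
      refine liminf_le_liminf ?_ isBounded_ge_of_bot isCobounded_ge_of_top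
      filter_upwards [self_mem_nhdsWithin] with y hy
      exact key y hy
  have hmem : η ∈ limitingSubdiff P0 (x (l + 1)) :=
    ⟨hwtop, fun _ => x (l + 1), fun _ => η, tendsto_const_nhds, tendsto_const_nhds,
      tendsto_const_nhds, fun _ => hfre⟩
  refine ⟨l, ?_, le_trans hl.le (min_le_left _ _)⟩
  have h3 : (⨅ η' ∈ limitingSubdiff P0 (x (l + 1)), (‖η' + v l‖₊ : ℝ≥0∞)) ≤
      (‖η + v l‖₊ : ℝ≥0∞) := biInf_le _ hmem
  refine le_trans h3 ?_
  have h4 : η + v l = -(β l • (x (l + 1) - x l)) := by rw [hη]; abel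
  rw [h4, ← enorm_eq_nnnorm, ← ofReal_norm]
  apply ENNReal.ofReal_le_ofReal
  rw [norm_neg, norm_smul, Real.norm_eq_abs, abs_of_pos (hβpos l)]
  calc β l * ‖x (l + 1) - x l‖ ≤ B * (ε / B) :=
        mul_le_mul (hB l) (le_trans hl.le (min_le_right _ _)) (norm_nonneg _) hB0.le
    _ = ε := by rw [mul_comm, div_mul_cancel₀ ε hB0.ne']
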